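/- Upper tail bound via the worst-case variance proxy: for every t > 0, μ{x : f(x) − E[f] > t} ≤ exp( −t² / (2·‖Df‖_∞) ), where Df = Σ_{k=1}^n (f − inf_k f)² and ‖·‖_∞ is the essential supremum norm. -/

import Mathlib

open MeasureTheory Real

section ProductSpace

variable {n : ℕ} {Ω : Fin n → Type*} [∀ k, MeasurableSpace (Ω k)]

/-- Thermal expectation `E_{βf}[g] = E[g e^{βf}] / E[e^{βf}]`. -/
noncomputable def thermalExp {α : Type*} [MeasurableSpace α] (ν : Measure α)
    (β : ℝ) (f g : α → ℝ) : ℝ :=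
  (∫ x, g x * Real.exp (β * f x) ∂ν) / ∫ x, Real.exp (β * f x) ∂ν

/-- Canonical entropy `S_f(β) = β E_{βf}[f] − ln Z_{βf}`. -/
noncomputable def canEntropy {α : Type*} [MeasurableSpace α] (ν : Measure α)
    (f : α → ℝ) (β : ℝ) : ℝ :=
  β * thermalExp ν β f f - Real.log (∫ x, Real.exp (β * f x) ∂ν)

/-- Conditional expectation `E_k[g](x) = ∫ g(x_{y,k}) dμ_k(y)`. -/
noncomputable def condExpK (μ : ∀ k, Measure (Ω k)) (k : Fin n)
    (g : (∀ i, Ω i) → ℝ) (x : ∀ i, Ω i) : ℝ :=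
  ∫ y, g (Function.update x k y) ∂(μ k)

/-- Conditional thermal expectation `E_{k,βf}[g](x) = E_k[g e^{βf}](x) / E_k[e^{βf}](x)`. -/
noncomputable def condThermalExpK (μ : ∀ k, Measure (Ω k)) (k : Fin n) (β : ℝ)
    (f g : (∀ i, Ω i) → ℝ) (x : ∀ i, Ω i) : ℝ :=
  (∫ y, g (Function.update x k y) * Real.exp (β * f (Function.update x k y)) ∂(μ k)) /
    ∫ y, Real.exp (β * f (Function.update x k y)) ∂(μ k)

/-- Conditional entropy `S_{k,f}(β)(x) = β E_{k,βf}[f](x) − ln Z_{k,βf}(x)`. -/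
noncomputable def condEntropyK (μ : ∀ k, Measure (Ω k)) (k : Fin n)
    (f : (∀ i, Ω i) → ℝ) (β : ℝ) (x : ∀ i, Ω i) : ℝ :=
  β * condThermalExpK μ k β f f x -
    Real.log (∫ y, Real.exp (β * f (Function.update x k y)) ∂(μ k))

/-- Conditional variance `σ²_k[g](x) = E_k[(g − E_k[g])²](x)`. -/
noncomputable def condVarK (μ : ∀ k, Measure (Ω k)) (k : Fin n)
    (g : (∀ i, Ω i) → ℝ) (x : ∀ i, Ω i) : ℝ :=
  ∫ y, (g (Function.update x k y) - condExpK μ k g x) ^ 2 ∂(μ k)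

/-- Conditional supremum `(sup_k g)(x) = sup_{y} g(x_{y,k})`. -/
noncomputable def condSupK (k : Fin n) (g : (∀ i, Ω i) → ℝ) (x : ∀ i, Ω i) : ℝ :=
  ⨆ y : Ω k, g (Function.update x k y)

/-- Conditional infimum `(inf_k g)(x) = inf_{y} g(x_{y,k})`. -/
noncomputable def condInfK (k : Fin n) (g : (∀ i, Ω i) → ℝ) (x : ∀ i, Ω i) : ℝ :=
  ⨅ y : Ω k, g (Function.update x k y)

/-- Worst-case variance proxy `Dg = Σ_k (g − inf_k g)²`. -/
noncomputable def Dproxy (g : (∀ i, Ω i) → ℝ) (x : ∀ i, Ω i) : ℝ :=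
  ∑ k, (g x - condInfK k g x) ^ 2

end ProductSpace

set_option linter.unusedSectionVars false

section OneDim
variable {α : Type*} [MeasurableSpace α] {ν : Measure α} [IsProbabilityMeasure ν]

lemma integrable_of_bdd {g : α → ℝ} (hg : Measurable g) {M : ℝ} (h : ∀ x, |g x| ≤ M) :
    Integrable g ν :=
  (integrable_const M).mono' hg.aestronglyMeasurable
    (Filter.Eventually.of_forall (by simpa using h))

lemma key1 (u : ℝ) (hu : 0 ≤ u) : u * exp u - exp u + 1 ≤ u ^ 2 / 2 * exp u := by
  have h := Real.sum_le_exp_of_nonneg hu 3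
  simp [Finset.sum_range_succ] at h
  nlinarith [sq_nonneg (u - 1), exp_pos u, sq_nonneg u]

lemma key2 {v w : ℝ} (h : w ≤ v) :
    (v - w) * exp v - exp v + exp w ≤ (v - w) ^ 2 / 2 * exp v := by
  have k1 := key1 (v - w) (by linarith)
  have e : exp v = exp (v - w) * exp w := by rw [← Real.exp_add]; ring_nf
  have := mul_le_mul_of_nonneg_right k1 (exp_pos w).le
  rw [e]; nlinarith [exp_pos w, exp_pos (v - w)]

lemma key3 {m : ℝ} (hm : 0 < m) (c : ℝ) : m * c + m - exp c ≤ m * log m := by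
  have h := Real.add_one_le_exp (c - log m)
  have e : exp (c - log m) = exp c / m := by rw [Real.exp_sub, Real.exp_log hm]
  rw [e] at h
  have h2 := mul_le_mul_of_nonneg_left h hm.le
  rw [mul_div_cancel₀ _ hm.ne'] at h2
  nlinarith

/-- One-dimensional entropy bound: `Ent(e^{lX}) ≤ (l²/2) E[(X-a)² e^{lX}]` for `a ≤ X` a.e. -/
lemma entropy_one_dim {X : α → ℝ} (hX : Measurable X) {M : ℝ} (hM : ∀ y, |X y| ≤ M)
    {a : ℝ} (haM : |a| ≤ M) (ha : ∀ᵐ y ∂ν, a ≤ X y) {l : ℝ} (hl : 0 ≤ l) :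
    ∫ y, l * X y * exp (l * X y) ∂ν
      - (∫ y, exp (l * X y) ∂ν) * log (∫ y, exp (l * X y) ∂ν)
      ≤ l ^ 2 / 2 * ∫ y, (X y - a) ^ 2 * exp (l * X y) ∂ν := by
  have hMnn : 0 ≤ M := le_trans (abs_nonneg _) (haM)
  have hbe : ∀ y, exp (l * X y) ≤ exp (l * M) := fun y =>
    exp_le_exp.2 (mul_le_mul_of_nonneg_left (le_trans (le_abs_self _) (hM y)) hl)
  have hbe' : ∀ y, |exp (l * X y)| ≤ exp (l * M) := fun y => by
    rw [abs_of_pos (exp_pos _)]; exact hbe y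
  have hmeasE : Measurable fun y => exp (l * X y) := (hX.const_mul l).exp
  have hiE : Integrable (fun y => exp (l * X y)) ν := integrable_of_bdd hmeasE hbe'
  have hi1 : Integrable (fun y => l * X y * exp (l * X y)) ν := by
    refine integrable_of_bdd ((hX.const_mul l).mul hmeasE) (M := l * M * exp (l * M)) fun y => ?_
    rw [abs_mul, abs_mul, abs_of_nonneg hl, abs_of_pos (exp_pos _)]
    have h1 : l * |X y| ≤ l * M := mul_le_mul_of_nonneg_left (hM y) hl
    exact mul_le_mul h1 (hbe y) (exp_pos _).le (mul_nonneg hl hMnn)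
  have hi2 : Integrable (fun y => (X y - a) ^ 2 * exp (l * X y)) ν := by
    refine integrable_of_bdd (((hX.sub measurable_const).pow_const 2).mul hmeasE)
      (M := (2 * M) ^ 2 * exp (l * M)) fun y => ?_
    rw [abs_mul]
    have h1 : |X y - a| ≤ 2 * M := by
      have := hM y; rw [abs_sub_comm]; calc |a - X y| ≤ |a| + |X y| := abs_sub _ _
        _ ≤ 2 * M := by linarith
    have h2 : |(X y - a) ^ 2| ≤ (2 * M) ^ 2 := by
      rw [abs_pow]; exact pow_le_pow_left₀ (abs_nonneg _) h1 2
    exact mul_le_mul h2 (hbe' y) (abs_nonneg _) (by positivity)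
  set m := ∫ y, exp (l * X y) ∂ν with hm_def
  have hmpos : 0 < m := by
    have : ∀ y, exp (-(l * M)) ≤ exp (l * X y) := fun y =>
      exp_le_exp.2 (by have := neg_le_of_abs_le (hM y); nlinarith)
    have hle := integral_mono (integrable_const (exp (-(l * M)))) hiE
      (fun y => this y)
    rw [integral_const] at hle
    simp only [probReal_univ, ENNReal.toReal_one, one_smul] at hle
    exact lt_of_lt_of_le (exp_pos _) hle
  -- lower bound on m log m
  have hk3 : m * (l * a) + m - exp (l * a) ≤ m * log m := key3 hmpos (l * a)
  -- pointwise inequality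
  have hpt : ∀ᵐ y ∂ν, l * X y * exp (l * X y) - (l * a) * exp (l * X y)
      - exp (l * X y) + exp (l * a) ≤ l ^ 2 / 2 * ((X y - a) ^ 2 * exp (l * X y)) := by
    filter_upwards [ha] with y hy
    have h2 := key2 (v := l * X y) (w := l * a) (mul_le_mul_of_nonneg_left hy hl)
    calc l * X y * exp (l * X y) - l * a * exp (l * X y) - exp (l * X y) + exp (l * a)
        = (l * X y - l * a) * exp (l * X y) - exp (l * X y) + exp (l * a) := by ring
      _ ≤ (l * X y - l * a) ^ 2 / 2 * exp (l * X y) := h2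
      _ = l ^ 2 / 2 * ((X y - a) ^ 2 * exp (l * X y)) := by ring
  have hint : ∫ y, (l * X y * exp (l * X y) - (l * a) * exp (l * X y)
      - exp (l * X y) + exp (l * a)) ∂ν
      ≤ ∫ y, l ^ 2 / 2 * ((X y - a) ^ 2 * exp (l * X y)) ∂ν := by
    refine integral_mono_ae ?_ (hi2.const_mul _) hpt
    exact ((hi1.sub (hiE.const_mul _)).sub hiE).add (integrable_const _)
  have hiB : Integrable (fun y => l * a * exp (l * X y)) ν := hiE.const_mul (l * a)
  have hiAB : Integrable (fun y => l * X y * exp (l * X y) - l * a * exp (l * X y)) ν :=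
    hi1.sub hiB
  have hiA : Integrable
      (fun y => l * X y * exp (l * X y) - l * a * exp (l * X y) - exp (l * X y)) ν :=
    hiAB.sub hiE
  have h4 := integral_add (μ := ν)
    (f := fun y => l * X y * exp (l * X y) - l * a * exp (l * X y) - exp (l * X y))
    (g := fun _ => exp (l * a)) hiA (integrable_const _)
  have h3 := integral_sub (μ := ν)
    (f := fun y => l * X y * exp (l * X y) - l * a * exp (l * X y))
    (g := fun y => exp (l * X y)) hiAB hiE
  have h2' := integral_sub (μ := ν)
    (f := fun y => l * X y * exp (l * X y))
    (g := fun y => l * a * exp (l * X y)) hi1 hiB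
  have hcm := integral_const_mul (μ := ν) (l * a) (fun y => exp (l * X y))
  have hcm2 := integral_const_mul (μ := ν) (l ^ 2 / 2) (fun y => (X y - a) ^ 2 * exp (l * X y))
  rw [h4, h3, h2', hcm, integral_const, hcm2] at hint
  simp only [probReal_univ, ENNReal.toReal_one, smul_eq_mul, one_mul] at hint
  linarith
end OneDim

section Aux
variable {n : ℕ} {Ω : Fin n → Type*} [∀ k, MeasurableSpace (Ω k)]

lemma nonempty_of_prob {β : Type*} [MeasurableSpace β] (ν : Measure β)
    [IsProbabilityMeasure ν] : Nonempty β := by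
  by_contra h
  rw [not_nonempty_iff] at h
  have h0 : ν Set.univ = 1 := measure_univ
  rw [Set.univ_eq_empty_iff.2 h, measure_empty] at h0
  exact zero_ne_one h0


variable (μ : ∀ k, Measure (Ω k)) [∀ k, IsProbabilityMeasure (μ k)]


lemma integrable_of_bdd' {β : Type*} [MeasurableSpace β] {ν : Measure β}
    [IsProbabilityMeasure ν] {g : β → ℝ} (hg : Measurable g) {M : ℝ} (h : ∀ x, |g x| ≤ M) :
    Integrable g ν :=
  (integrable_const M).mono' hg.aestronglyMeasurable
    (Filter.Eventually.of_forall (by simpa using h))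

lemma condExpK_measurable (k : Fin n) {g : (∀ i, Ω i) → ℝ} (hg : Measurable g) :
    Measurable (condExpK μ k g) :=
  (StronglyMeasurable.integral_prod_right'
    (f := fun p : (∀ i, Ω i) × Ω k => g (Function.update p.1 k p.2))
    (hg.comp measurable_update').stronglyMeasurable).measurable

lemma condExpK_abs_le (k : Fin n) {g : (∀ i, Ω i) → ℝ} {M : ℝ} (hb : ∀ x, |g x| ≤ M) (x) :
    |condExpK μ k g x| ≤ M := by
  have := norm_integral_le_of_norm_le_const (μ := μ k)
    (f := fun y => g (Function.update x k y)) (C := M)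
    (Filter.Eventually.of_forall fun y => by simpa using hb _)
  simpa [condExpK, measure_univ] using this

lemma condExpK_le_of_le (k : Fin n) {g : (∀ i, Ω i) → ℝ} (hg : Measurable g)
    {M c : ℝ} (hb : ∀ x, |g x| ≤ M) (hc : ∀ x, c ≤ g x) (x) : c ≤ condExpK μ k g x := by
  have h := integral_mono (μ := μ k) (integrable_const c)
    (integrable_of_bdd' (hg.comp (measurable_update x)) (fun y => hb _))
    (fun y => hc _)
  simpa [measure_univ, condExpK] using h

lemma condExpK_update_self (k : Fin n) (g : (∀ i, Ω i) → ℝ) (x y) :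
    condExpK μ k g (Function.update x k y) = condExpK μ k g x := by
  simp [condExpK, Function.update_idem]

lemma condExpK_mul_invariant (k : Fin n) (g h : (∀ i, Ω i) → ℝ)
    (hh : ∀ x y, h (Function.update x k y) = h x) (x) :
    condExpK μ k (fun z => g z * h z) x = condExpK μ k g x * h x := by
  simp only [condExpK, hh]
  exact integral_mul_const _ _

/-- Fubini for one coordinate of a product measure. -/
lemma integral_condExpK (k : Fin n) {g : (∀ i, Ω i) → ℝ} (hg : Measurable g)
    {M : ℝ} (hb : ∀ x, |g x| ≤ M) :
    ∫ x, condExpK μ k g x ∂(Measure.pi μ) = ∫ x, g x ∂(Measure.pi μ) := by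
  cases n with
  | zero => exact k.elim0
  | succ m =>
    set e := MeasurableEquiv.piFinSuccAbove Ω k with he
    have mp := measurePreserving_piFinSuccAbove μ k
    have hupd : ∀ (y w : Ω k) (z : ∀ j, Ω (k.succAbove j)),
        Function.update (e.symm (y, z)) k w = e.symm (w, z) := by
      intro y w z
      have h1 : e.symm (y, z) = Fin.insertNth k y z := rfl
      have h2 : e.symm (w, z) = Fin.insertNth k w z := rfl
      rw [h1, h2, Fin.update_insertNth]
    have key : ∀ (g' : (∀ i, Ω i) → ℝ), Measurable g' → ∀ (M' : ℝ), (∀ x, |g' x| ≤ M') →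
        ∫ x, g' x ∂(Measure.pi μ)
          = ∫ z, ∫ y, g' (e.symm (y, z)) ∂(μ k) ∂(Measure.pi fun j => μ (k.succAbove j)) := by
      intro g' hg' M' hb'
      have hGm : Measurable (fun p : Ω k × (∀ j, Ω (k.succAbove j)) => g' (e.symm p)) :=
        hg'.comp e.symm.measurable
      have hGint : Integrable (fun p => g' (e.symm p))
          ((μ k).prod (Measure.pi fun j => μ (k.succAbove j))) :=
        integrable_of_bdd' hGm (fun p => hb' _)
      calc ∫ x, g' x ∂(Measure.pi μ) = ∫ x, g' (e.symm (e x)) ∂(Measure.pi μ) := by simp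
        _ = ∫ p, g' (e.symm p) ∂((μ k).prod (Measure.pi fun j => μ (k.succAbove j))) :=
            mp.integral_comp' fun p => g' (e.symm p)
        _ = ∫ y, ∫ z, g' (e.symm (y, z)) ∂(Measure.pi fun j => μ (k.succAbove j)) ∂(μ k) :=
            integral_prod _ hGint
        _ = ∫ z, ∫ y, g' (e.symm (y, z)) ∂(μ k) ∂(Measure.pi fun j => μ (k.succAbove j)) :=
            integral_integral_swap hGint
    have h1 := key g hg M hb
    have h2 := key (condExpK μ k g) (condExpK_measurable μ k hg) M (condExpK_abs_le μ k hb)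
    rw [h1, h2]
    congr 1
    funext z
    have hinner : ∀ y, condExpK μ k g (e.symm (y, z)) = ∫ w, g (e.symm (w, z)) ∂(μ k) := by
      intro y
      simp only [condExpK, hupd]
    simp only [hinner]
    rw [integral_const]
    simp [measure_univ]


/-- Measurable "essential conditional infimum" along coordinate `k`. -/
noncomputable def bK (k : Fin n) (f : (∀ i, Ω i) → ℝ) (x : ∀ i, Ω i) : ℝ :=
  sSup {c : ℝ | (μ k) {y | f (Function.update x k y) < c} = 0}

section bKfacts
variable (k : Fin n) {f : (∀ i, Ω i) → ℝ} {C : ℝ}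

lemma bK_set_mem (hC : ∀ x, |f x| ≤ C) (x : ∀ i, Ω i) : -C ∈ {c : ℝ | (μ k) {y | f (Function.update x k y) < c} = 0} := by
  have : {y | f (Function.update x k y) < -C} = ∅ := by
    ext y; simp only [Set.mem_setOf_eq, Set.mem_empty_iff_false, iff_false, not_lt]
    exact neg_le_of_abs_le (hC _)
  simp [this]

lemma bK_set_ub (hC : ∀ x, |f x| ≤ C) (x : ∀ i, Ω i) :
    ∀ c ∈ {c : ℝ | (μ k) {y | f (Function.update x k y) < c} = 0}, c ≤ C := by
  intro c hc
  by_contra hlt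
  push_neg at hlt
  have hN : Nonempty (Ω k) := nonempty_of_prob (μ k)
  have : {y | f (Function.update x k y) < c} = Set.univ := by
    ext y; simp only [Set.mem_setOf_eq, Set.mem_univ, iff_true]
    exact lt_of_le_of_lt (le_trans (le_abs_self _) (hC _)) hlt
  rw [Set.mem_setOf_eq, this, measure_univ] at hc
  exact one_ne_zero hc

lemma bK_bddAbove (hC : ∀ x, |f x| ≤ C) (x : ∀ i, Ω i) :
    BddAbove {c : ℝ | (μ k) {y | f (Function.update x k y) < c} = 0} :=
  ⟨C, fun c hc => bK_set_ub μ k hC x c hc⟩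

lemma bK_le (hC : ∀ x, |f x| ≤ C) (x : ∀ i, Ω i) : bK μ k f x ≤ C :=
  csSup_le ⟨-C, bK_set_mem μ k hC x⟩ (bK_set_ub μ k hC x)

lemma le_bK (hC : ∀ x, |f x| ≤ C) (x : ∀ i, Ω i) : -C ≤ bK μ k f x :=
  le_csSup (bK_bddAbove μ k hC x) (bK_set_mem μ k hC x)

lemma bK_downward {x : ∀ i, Ω i} {c c' : ℝ} (h : c' ≤ c)
    (hc : c ∈ {c : ℝ | (μ k) {y | f (Function.update x k y) < c} = 0}) :
    c' ∈ {c : ℝ | (μ k) {y | f (Function.update x k y) < c} = 0} :=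
  measure_mono_null (fun y hy => lt_of_lt_of_le hy h) hc

lemma bK_ae_le (hC : ∀ x, |f x| ≤ C) (x : ∀ i, Ω i) : ∀ᵐ y ∂(μ k), bK μ k f x ≤ f (Function.update x k y) := by
  rw [ae_iff]
  simp only [not_le]
  set S := {c : ℝ | (μ k) {y | f (Function.update x k y) < c} = 0} with hS
  have hcover : {y | f (Function.update x k y) < bK μ k f x} ⊆
      ⋃ q : ℚ, if (q : ℝ) ∈ S then {y | f (Function.update x k y) < (q : ℝ)} else ∅ := by
    intro y hy
    obtain ⟨c, hcS, hyc⟩ := exists_lt_of_lt_csSup ⟨-C, bK_set_mem μ k hC x⟩ hy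
    obtain ⟨q, hq1, hq2⟩ := exists_rat_btwn hyc
    refine Set.mem_iUnion.2 ⟨q, ?_⟩
    rw [if_pos (bK_downward μ k hq2.le hcS)]
    exact hq1
  refine measure_mono_null hcover (measure_iUnion_null fun q => ?_)
  split_ifs with h
  · exact h
  · exact measure_empty

lemma condInfK_le_bK (hC : ∀ x, |f x| ≤ C) (x : ∀ i, Ω i) : condInfK k f x ≤ bK μ k f x := by
  have hN : Nonempty (Ω k) := nonempty_of_prob (μ k)
  refine le_csSup (bK_bddAbove μ k hC x) ?_
  have : {y | f (Function.update x k y) < condInfK k f x} = ∅ := by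
    ext y
    simp only [Set.mem_setOf_eq, Set.mem_empty_iff_false, iff_false, not_lt]
    exact ciInf_le ⟨-C, by rintro r ⟨y', rfl⟩; exact neg_le_of_abs_le (hC _)⟩ y
  simp [this]

lemma condInfK_le_self (hN : Nonempty (Ω k)) (hC : ∀ x, |f x| ≤ C) (x : ∀ i, Ω i) : condInfK k f x ≤ f x := by
  have h := ciInf_le (f := fun y => f (Function.update x k y))
    ⟨-C, by rintro r ⟨y', rfl⟩; exact neg_le_of_abs_le (hC _)⟩ (x k)
  rwa [Function.update_eq_self] at h

lemma neg_C_le_condInfK (hN : Nonempty (Ω k)) (hC : ∀ x, |f x| ≤ C) (x : ∀ i, Ω i) : -C ≤ condInfK k f x := by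
  exact le_ciInf fun y => neg_le_of_abs_le (hC _)

lemma bK_update_self (x : ∀ i, Ω i) (y : Ω k) :
    bK μ k f (Function.update x k y) = bK μ k f x := by
  simp [bK, Function.update_idem]

lemma bK_measurable (hf : Measurable f) (hC : ∀ x, |f x| ≤ C) : Measurable (bK μ k f) := by
  have hN : Nonempty (Ω k) := nonempty_of_prob (μ k)
  have hCnn : 0 ≤ C := by
    have hNx : Nonempty (∀ i, Ω i) := ⟨fun i => (nonempty_of_prob (μ i)).some⟩
    exact le_trans (abs_nonneg _) (hC hNx.some)
  have hkey : ∀ x, bK μ k f x = ⨆ q : ℚ,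
      (if (μ k) {y | f (Function.update x k y) < (q : ℝ)} = 0 then (q : ℝ) else -C) := by
    intro x
    set S := {c : ℝ | (μ k) {y | f (Function.update x k y) < c} = 0} with hS
    have hbddr : BddAbove (Set.range fun q : ℚ =>
        (if (μ k) {y | f (Function.update x k y) < (q : ℝ)} = 0 then (q : ℝ) else -C)) := by
      refine ⟨C, ?_⟩
      rintro r ⟨q, rfl⟩
      dsimp only
      split_ifs with h
      · exact bK_set_ub μ k hC x _ h
      · linarith
    refine le_antisymm ?_ ?_
    · refine csSup_le ⟨-C, bK_set_mem μ k hC x⟩ fun c hc => ?_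
      refine le_of_forall_lt fun b hb => ?_
      obtain ⟨q, hq1, hq2⟩ := exists_rat_btwn hb
      have hqS : (μ k) {y | f (Function.update x k y) < (q : ℝ)} = 0 := bK_downward μ k hq2.le hc
      calc b < (q : ℝ) := hq1
        _ = (if (μ k) {y | f (Function.update x k y) < (q : ℝ)} = 0 then (q : ℝ) else -C) := by
            rw [if_pos hqS]
        _ ≤ _ := le_ciSup hbddr q
    · refine ciSup_le fun q => ?_
      split_ifs with h
      · exact le_csSup (bK_bddAbove μ k hC x) h
      · exact le_csSup (bK_bddAbove μ k hC x) (bK_set_mem μ k hC x)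
  have : (bK μ k f) = fun x => ⨆ q : ℚ,
      (if (μ k) {y | f (Function.update x k y) < (q : ℝ)} = 0 then (q : ℝ) else -C) :=
    funext hkey
  rw [this]
  refine Measurable.iSup fun q => ?_
  have hs : MeasurableSet {p : (∀ i, Ω i) × Ω k | f (Function.update p.1 k p.2) < (q : ℝ)} :=
    measurableSet_lt (hf.comp measurable_update') measurable_const
  have hker : Measurable fun x => (μ k) (Prod.mk x ⁻¹' {p : (∀ i, Ω i) × Ω k |
      f (Function.update p.1 k p.2) < (q : ℝ)}) := measurable_measure_prodMk_left hs
  have hset : MeasurableSet {x | (μ k) {y | f (Function.update x k y) < (q : ℝ)} = 0} := by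
    have : {x | (μ k) {y | f (Function.update x k y) < (q : ℝ)} = 0}
        = (fun x => (μ k) (Prod.mk x ⁻¹' {p : (∀ i, Ω i) × Ω k |
            f (Function.update p.1 k p.2) < (q : ℝ)})) ⁻¹' {0} := by
      ext x; simp [Set.preimage]
    rw [this]
    exact hker (measurableSet_singleton 0)
  exact Measurable.ite hset measurable_const measurable_const

end bKfacts

end Aux

section Iter
variable {n : ℕ} {Ω : Fin n → Type*} [∀ k, MeasurableSpace (Ω k)]
variable (μ : ∀ k, Measure (Ω k)) [∀ k, IsProbabilityMeasure (μ k)]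

noncomputable def iterExp (U : (∀ i, Ω i) → ℝ) : ℕ → (∀ i, Ω i) → ℝ
  | 0 => U
  | j + 1 => if h : j < n then condExpK μ ⟨j, h⟩ (iterExp U j) else iterExp U j

variable {U : (∀ i, Ω i) → ℝ} {M : ℝ}

lemma iterExp_measurable (hU : Measurable U) (j : ℕ) : Measurable (iterExp μ U j) := by
  induction j with
  | zero => exact hU
  | succ j ih =>
    rw [iterExp]
    split_ifs with h
    · exact condExpK_measurable μ _ ih
    · exact ih

lemma iterExp_abs_le (hM : ∀ x, |U x| ≤ M) (j : ℕ) : ∀ x, |iterExp μ U j x| ≤ M := by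
  induction j with
  | zero => exact hM
  | succ j ih =>
    intro x
    rw [iterExp]
    split_ifs with h
    · exact condExpK_abs_le μ _ ih x
    · exact ih x

lemma iterExp_le (hU : Measurable U) (hM : ∀ x, |U x| ≤ M) {c : ℝ} (hc : ∀ x, c ≤ U x)
    (j : ℕ) : ∀ x, c ≤ iterExp μ U j x := by
  induction j with
  | zero => exact hc
  | succ j ih =>
    intro x
    rw [iterExp]
    split_ifs with h
    · exact condExpK_le_of_le μ _ (iterExp_measurable μ hU j) (iterExp_abs_le μ hM j) ih x
    · exact ih x

lemma iterExp_update (hU : Measurable U) (i : Fin n) (j : ℕ) (hij : (i : ℕ) < j) :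
    ∀ x y, iterExp μ U j (Function.update x i y) = iterExp μ U j x := by
  induction j with
  | zero => omega
  | succ j ih =>
    intro x y
    simp only [iterExp]
    split_ifs with h
    · rcases lt_or_eq_of_le (Nat.lt_succ_iff.mp hij) with hlt | heq
      · have hne : i ≠ (⟨j, h⟩ : Fin n) := by
          intro hcon
          rw [hcon] at hlt
          exact lt_irrefl _ hlt
        unfold condExpK
        refine integral_congr_ae (Filter.Eventually.of_forall fun w => ?_)
        dsimp only
        rw [Function.update_comm hne, ih hlt]
      · have hik : i = (⟨j, h⟩ : Fin n) := Fin.ext heq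
        subst hik
        exact condExpK_update_self μ _ _ _ _
    · exact ih (lt_of_lt_of_le i.2 (le_of_not_gt h)) x y

lemma integral_iterExp (hU : Measurable U) (hM : ∀ x, |U x| ≤ M) (j : ℕ) :
    ∫ x, iterExp μ U j x ∂(Measure.pi μ) = ∫ x, U x ∂(Measure.pi μ) := by
  induction j with
  | zero => rfl
  | succ j ih =>
    rw [iterExp]
    split_ifs with h
    · rw [integral_condExpK μ _ (iterExp_measurable μ hU j) (iterExp_abs_le μ hM j)]
      exact ih
    · exact ih

lemma const_of_update_invariant {g : (∀ i, Ω i) → ℝ}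
    (hg : ∀ (k : Fin n) x y, g (Function.update x k y) = g x) (x x' : ∀ i, Ω i) :
    g x = g x' := by
  have key : ∀ s : Finset (Fin n), g (s.piecewise x' x) = g x := by
    intro s
    induction s using Finset.induction with
    | empty => simp
    | insert _ _ hns ih =>
      rw [Finset.piecewise_insert, hg, ih]
  have := key Finset.univ
  rw [Finset.piecewise_univ] at this
  exact this.symm

lemma iterExp_top_eq (hU : Measurable U) (hM : ∀ x, |U x| ≤ M) (x : ∀ i, Ω i) :
    iterExp μ U n x = ∫ z, U z ∂(Measure.pi μ) := by
  have hconst : ∀ x x', iterExp μ U n x = iterExp μ U n x' :=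
    const_of_update_invariant (fun k z y => iterExp_update μ hU k n k.2 z y)
  have hint := integral_iterExp μ hU hM n
  have : ∫ z, iterExp μ U n z ∂(Measure.pi μ) = iterExp μ U n x := by
    rw [integral_congr_ae (Filter.Eventually.of_forall fun z => hconst z x)]
    simp [measure_univ]
  rw [← this, hint]

end Iter

section KEI
variable {n : ℕ} {Ω : Fin n → Type*} [∀ k, MeasurableSpace (Ω k)]
variable (μ : ∀ k, Measure (Ω k)) [∀ k, IsProbabilityMeasure (μ k)]

lemma bK_ae_le_self (k : Fin n) {f : (∀ i, Ω i) → ℝ} {C : ℝ}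
    (hf : Measurable f) (hC : ∀ x, |f x| ≤ C) :
    ∀ᵐ z ∂(Measure.pi μ), bK μ k f z ≤ f z := by
  set B := {z | f z < bK μ k f z} with hB
  have hBm : MeasurableSet B := measurableSet_lt hf (bK_measurable μ k hf hC)
  have hindm : Measurable (B.indicator (fun _ => (1 : ℝ))) :=
    measurable_const.indicator hBm
  have hindb : ∀ z, |B.indicator (fun _ => (1 : ℝ)) z| ≤ 1 := by
    intro z
    rw [Set.indicator_apply]
    split_ifs <;> simp
  have hcond : ∀ x, condExpK μ k (B.indicator (fun _ => (1 : ℝ))) x = 0 := by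
    intro x
    have hae : ∀ᵐ y ∂(μ k), B.indicator (fun _ => (1 : ℝ)) (Function.update x k y) = 0 := by
      filter_upwards [bK_ae_le μ k hC x] with y hy
      rw [Set.indicator_of_notMem]
      simp only [hB, Set.mem_setOf_eq, not_lt]
      rw [bK_update_self]
      exact hy
    unfold condExpK
    rw [integral_congr_ae hae, integral_zero]
  have h0 : ∫ z, B.indicator (fun _ => (1 : ℝ)) z ∂(Measure.pi μ) = 0 := by
    rw [← integral_condExpK μ k hindm hindb]
    simp [hcond]
  have h1 : ((Measure.pi μ) B).toReal = 0 := by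
    rw [← measureReal_def, ← integral_indicator_one hBm]
    exact h0
  have h2 : (Measure.pi μ) B = 0 := by
    have := measure_ne_top (Measure.pi μ) B
    exact (ENNReal.toReal_eq_zero_iff _).1 h1 |>.resolve_right this
  rw [ae_iff]
  convert h2 using 2
  ext z
  simp [hB, not_le]

lemma entropy_ineq {f : (∀ i, Ω i) → ℝ} {C : ℝ} (hf : Measurable f) (hC : ∀ x, |f x| ≤ C)
    {l : ℝ} (hl : 0 ≤ l) {a : ℝ}
    (ha : ∀ᵐ x ∂(Measure.pi μ), Dproxy f x ≤ a) :
    l * (∫ x, f x * exp (l * f x) ∂(Measure.pi μ))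
      - (∫ x, exp (l * f x) ∂(Measure.pi μ)) * log (∫ x, exp (l * f x) ∂(Measure.pi μ))
      ≤ l ^ 2 / 2 * a * ∫ x, exp (l * f x) ∂(Measure.pi μ) := by
  classical
  set pp := Measure.pi μ with hpp
  haveI : IsProbabilityMeasure pp := by rw [hpp]; infer_instance
  set U : (∀ i, Ω i) → ℝ := fun x => exp (l * f x) with hU
  set c₀ : ℝ := exp (-(l * C)) with hc₀
  set M₀ : ℝ := exp (l * C) with hM₀
  have hc₀pos : 0 < c₀ := exp_pos _
  have hUm : Measurable U := (hf.const_mul l).exp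
  have hUub : ∀ x, U x ≤ M₀ := fun x =>
    exp_le_exp.2 (mul_le_mul_of_nonneg_left ((le_abs_self _).trans (hC x)) hl)
  have hUlb : ∀ x, c₀ ≤ U x := fun x =>
    exp_le_exp.2 (by have := neg_le_of_abs_le (hC x); nlinarith)
  have hUb : ∀ x, |U x| ≤ M₀ := fun x => by
    rw [abs_of_pos (exp_pos _)]; exact hUub x
  have hU0 : ∀ x, 0 < U x := fun x => exp_pos _
  -- log bounds helper
  have hlog : ∀ t : ℝ, c₀ ≤ t → t ≤ M₀ → |log t| ≤ l * C := by
    intro t h1 h2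
    have hl1 : log c₀ ≤ log t := Real.log_le_log hc₀pos h1
    have hl2 : log t ≤ log M₀ := Real.log_le_log (lt_of_lt_of_le hc₀pos h1) h2
    rw [hc₀, Real.log_exp] at hl1
    rw [hM₀, Real.log_exp] at hl2
    exact abs_le.2 ⟨hl1, hl2⟩
  set V : ℕ → (∀ i, Ω i) → ℝ := iterExp μ U with hV
  have hVm : ∀ j, Measurable (V j) := iterExp_measurable μ hUm
  have hVb : ∀ j x, |V j x| ≤ M₀ := iterExp_abs_le μ hUb
  have hVlb : ∀ j x, c₀ ≤ V j x := iterExp_le μ hUm hUb hUlb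
  have hVpos : ∀ j x, 0 < V j x := fun j x => lt_of_lt_of_le hc₀pos (hVlb j x)
  set m := ∫ x, U x ∂pp with hm
  have hVn : ∀ x, V n x = m := iterExp_top_eq μ hUm hUb
  have hmlb : c₀ ≤ m := by
    have h := integral_mono (μ := pp) (integrable_const c₀) (integrable_of_bdd' hUm hUb) hUlb
    simpa [measure_univ] using h
  have hmpos : 0 < m := lt_of_lt_of_le hc₀pos hmlb
  -- conditional expectations of U
  set E : Fin n → (∀ i, Ω i) → ℝ := fun k => condExpK μ k U with hE
  have hEm : ∀ k, Measurable (E k) := fun k => condExpK_measurable μ k hUm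
  have hEb : ∀ k x, |E k x| ≤ M₀ := fun k => condExpK_abs_le μ k hUb
  have hElb : ∀ k x, c₀ ≤ E k x := fun k => condExpK_le_of_le μ k hUm hUb hUlb
  have hEpos : ∀ k x, 0 < E k x := fun k x => lt_of_lt_of_le hc₀pos (hElb k x)
  -- the b functions
  have hbKm : ∀ k : Fin n, Measurable (bK μ k f) := fun k => bK_measurable μ k hf hC
  set G : Fin n → (∀ i, Ω i) → ℝ := fun k z => (f z - bK μ k f z) ^ 2 * U z with hG
  have hGm : ∀ k, Measurable (G k) := fun k => ((hf.sub (hbKm k)).pow_const 2).mul hUm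
  have hGb : ∀ k z, |G k z| ≤ (2 * C) ^ 2 * M₀ := by
    intro k z
    rw [abs_mul]
    have h1 : |f z - bK μ k f z| ≤ 2 * C := by
      have := hC z
      have h2 := bK_le μ k hC z
      have h3 := le_bK μ k hC z
      rw [abs_le] at this ⊢
      constructor <;> nlinarith [this.1, this.2]
    have h2 : |(f z - bK μ k f z) ^ 2| ≤ (2 * C) ^ 2 := by
      rw [abs_pow]
      exact pow_le_pow_left₀ (abs_nonneg _) h1 2
    exact mul_le_mul h2 (hUb z) (abs_nonneg _) (by positivity)
  -- Step 2: telescoping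
  have hsum : ∀ x, ∑ j ∈ Finset.range n, (log (V j x) - log (V (j + 1) x))
      = log (U x) - log m := by
    intro x
    rw [Finset.sum_range_sub' (fun j => log (V j x))]
    rw [hVn x]
    rfl
  have hTm : ∀ j : ℕ, Measurable fun x => U x * (log (V j x) - log (V (j + 1) x)) :=
    fun j => hUm.mul ((hVm j).log.sub (hVm (j + 1)).log)
  have hTb : ∀ j x, |U x * (log (V j x) - log (V (j + 1) x))| ≤ M₀ * (l * C + l * C) := by
    intro j x
    rw [abs_mul]
    refine mul_le_mul (hUb x) ?_ (abs_nonneg _) ?_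
    · calc |log (V j x) - log (V (j + 1) x)| ≤ |log (V j x)| + |log (V (j + 1) x)| :=
          abs_sub _ _
        _ ≤ l * C + l * C := add_le_add (hlog _ (hVlb j x) ((le_abs_self _).trans (hVb j x)))
            (hlog _ (hVlb (j+1) x) ((le_abs_self _).trans (hVb (j+1) x)))
    · exact le_trans (abs_nonneg _) (hUb x)
  have hUlogUm : Measurable fun x => U x * log (U x) := hUm.mul hUm.log
  have hUlogUb : ∀ x, |U x * log (U x)| ≤ M₀ * (l * C) := fun x => by
    rw [abs_mul]
    exact mul_le_mul (hUb x) (hlog _ (hUlb x) (hUub x)) (abs_nonneg _)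
      (le_trans (abs_nonneg _) (hUb x))
  have hEnt_eq : ∫ x, U x * log (U x) ∂pp - m * log m
      = ∑ j ∈ Finset.range n, ∫ x, U x * (log (V j x) - log (V (j + 1) x)) ∂pp := by
    rw [← integral_finset_sum _ (fun j _ => integrable_of_bdd' (hTm j) (hTb j))]
    have h1 : ∀ x, ∑ j ∈ Finset.range n, U x * (log (V j x) - log (V (j + 1) x))
        = U x * log (U x) - U x * log m := by
      intro x
      rw [← Finset.mul_sum, hsum]
      ring
    rw [integral_congr_ae (Filter.Eventually.of_forall h1)]
    rw [integral_sub (integrable_of_bdd' hUlogUm hUlogUb)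
      ((integrable_of_bdd' hUm hUb).mul_const (log m))]
    rw [integral_mul_const]
  -- per-coordinate bound
  have hElogEb : ∀ (k : Fin n) x, |E k x * log (E k x)| ≤ M₀ * (l * C) := by
    intro k x
    rw [abs_mul]
    exact mul_le_mul (hEb k x) (hlog _ (hElb k x) ((le_abs_self _).trans (hEb k x)))
      (abs_nonneg _) (le_trans (abs_nonneg _) (hEb k x))
  have hperj : ∀ j, ∀ hj : j < n,
      ∫ x, U x * (log (V j x) - log (V (j + 1) x)) ∂pp
        ≤ l ^ 2 / 2 * ∫ x, G ⟨j, hj⟩ x ∂pp := by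
    intro j hj
    set k : Fin n := ⟨j, hj⟩ with hk
    have hVsucc : ∀ x, V (j + 1) x = condExpK μ k (V j) x := by
      intro x
      show iterExp μ U (j + 1) x = _
      simp only [iterExp, dif_pos hj]
      rfl
    have hV1inv : ∀ x y, V (j + 1) (Function.update x k y) = V (j + 1) x :=
      fun x y => iterExp_update μ hUm k (j + 1) (by simp [hk]) x y
    have hEinv : ∀ x y, E k (Function.update x k y) = E k x :=
      fun x y => condExpK_update_self μ k U x y
    have hpt : ∀ x, U x * (log (V j x) - log (V (j + 1) x))
        ≤ U x * log (U x) - U x * log (E k x) + V j x * (E k x / V (j + 1) x) - U x := by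
      intro x
      have hV1 := hVpos j x
      have hV2 := hVpos (j + 1) x
      have hE1 := hEpos k x
      have hU1 := hU0 x
      have hzpos : 0 < V j x * E k x / (V (j + 1) x * U x) := by positivity
      have hlog1 := Real.log_le_sub_one_of_pos hzpos
      have hexp : log (V j x * E k x / (V (j + 1) x * U x))
          = log (V j x) + log (E k x) - (log (V (j + 1) x) + log (U x)) := by
        rw [Real.log_div (by positivity) (by positivity), Real.log_mul hV1.ne' hE1.ne',
          Real.log_mul hV2.ne' hU1.ne']
      rw [hexp] at hlog1
      have h2 := mul_le_mul_of_nonneg_left hlog1 hU1.le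
      have h3 : U x * (V j x * E k x / (V (j + 1) x * U x) - 1)
          = V j x * (E k x / V (j + 1) x) - U x := by
        field_simp
      nlinarith [h2, h3]
    have hQm : Measurable fun x => V j x * (E k x / V (j + 1) x) :=
      (hVm j).mul ((hEm k).div (hVm (j + 1)))
    have hQb : ∀ x, |V j x * (E k x / V (j + 1) x)| ≤ M₀ * (M₀ / c₀) := by
      intro x
      rw [abs_mul]
      refine mul_le_mul (hVb j x) ?_ (abs_nonneg _) (le_trans (abs_nonneg _) (hVb j x))
      rw [abs_div]
      refine div_le_div₀ (exp_pos _).le (hEb k x) hc₀pos ?_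
      rw [abs_of_pos (hVpos (j + 1) x)]
      exact hVlb (j + 1) x
    have hUlogEm : Measurable fun x => U x * log (E k x) := hUm.mul (hEm k).log
    have hUlogEb : ∀ x, |U x * log (E k x)| ≤ M₀ * (l * C) := fun x => by
      rw [abs_mul]
      exact mul_le_mul (hUb x) (hlog _ (hElb k x) ((le_abs_self _).trans (hEb k x)))
        (abs_nonneg _) (le_trans (abs_nonneg _) (hUb x))
    have hiA : Integrable (fun x => U x * log (U x)) pp := integrable_of_bdd' hUlogUm hUlogUb
    have hiB : Integrable (fun x => U x * log (E k x)) pp := integrable_of_bdd' hUlogEm hUlogEb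
    have hiQ : Integrable (fun x => V j x * (E k x / V (j + 1) x)) pp :=
      integrable_of_bdd' hQm hQb
    have hiU : Integrable U pp := integrable_of_bdd' hUm hUb
    have hdual : ∫ x, U x * (log (V j x) - log (V (j + 1) x)) ∂pp
        ≤ (∫ x, U x * log (U x) ∂pp) - (∫ x, U x * log (E k x) ∂pp)
          + (∫ x, V j x * (E k x / V (j + 1) x) ∂pp) - m := by
      have hInt := integral_mono (integrable_of_bdd' (hTm j) (hTb j))
        (((hiA.sub hiB).add hiQ).sub hiU) hpt
      have e1 : ∫ x, (U x * log (U x) - U x * log (E k x)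
            + V j x * (E k x / V (j + 1) x) - U x) ∂pp
          = (∫ x, (U x * log (U x) - U x * log (E k x)
              + V j x * (E k x / V (j + 1) x)) ∂pp) - ∫ x, U x ∂pp :=
        integral_sub ((hiA.sub hiB).add hiQ) hiU
      have e2 : ∫ x, (U x * log (U x) - U x * log (E k x)
            + V j x * (E k x / V (j + 1) x)) ∂pp
          = (∫ x, (U x * log (U x) - U x * log (E k x)) ∂pp)
            + ∫ x, V j x * (E k x / V (j + 1) x) ∂pp :=
        integral_add (hiA.sub hiB) hiQ
      have e3 : ∫ x, (U x * log (U x) - U x * log (E k x)) ∂pp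
          = (∫ x, U x * log (U x) ∂pp) - ∫ x, U x * log (E k x) ∂pp :=
        integral_sub hiA hiB
      have hInt' : ∫ x, U x * (log (V j x) - log (V (j + 1) x)) ∂pp
          ≤ ∫ x, (U x * log (U x) - U x * log (E k x)
              + V j x * (E k x / V (j + 1) x) - U x) ∂pp := hInt
      rw [e1, e2, e3] at hInt'
      exact hInt'
    have hfub1 : ∫ x, U x * log (E k x) ∂pp = ∫ x, E k x * log (E k x) ∂pp := by
      have hinv : ∀ x y, (fun z => log (E k z)) (Function.update x k y) = log (E k x) :=
        fun x y => by simp only; rw [hEinv]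
      have hcm := condExpK_mul_invariant μ k U (fun z => log (E k z)) hinv
      rw [← integral_condExpK μ k hUlogEm hUlogEb]
      exact integral_congr_ae (Filter.Eventually.of_forall fun x => hcm x)
    have hfub2 : ∫ x, V j x * (E k x / V (j + 1) x) ∂pp = m := by
      have hinv2 : ∀ x y, (fun z => E k z / V (j + 1) z) (Function.update x k y)
          = E k x / V (j + 1) x := fun x y => by simp only; rw [hEinv, hV1inv]
      have hcm := condExpK_mul_invariant μ k (V j) (fun z => E k z / V (j + 1) z) hinv2
      have hpt2 : ∀ x, condExpK μ k (fun z => V j z * (E k z / V (j + 1) z)) x = E k x := by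
        intro x
        rw [hcm x, ← hVsucc x]
        have hne := (hVpos (j + 1) x).ne'
        field_simp
      rw [← integral_condExpK μ k hQm hQb,
        integral_congr_ae (Filter.Eventually.of_forall hpt2)]
      show ∫ x, condExpK μ k U x ∂pp = m
      rw [integral_condExpK μ k hUm hUb]
    have hfub3 : ∫ x, U x * log (U x) ∂pp
        = ∫ x, condExpK μ k (fun z => U z * log (U z)) x ∂pp :=
      (integral_condExpK μ k hUlogUm hUlogUb).symm
    have hcondent : ∀ x, condExpK μ k (fun z => U z * log (U z)) x - E k x * log (E k x)
        ≤ l ^ 2 / 2 * condExpK μ k (G k) x := by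
      intro x
      have hX : Measurable fun y => f (Function.update x k y) := hf.comp (measurable_update x)
      have hXb : ∀ y, |f (Function.update x k y)| ≤ C := fun y => hC _
      have haM : |bK μ k f x| ≤ C := abs_le.2 ⟨le_bK μ k hC x, bK_le μ k hC x⟩
      have h1d := entropy_one_dim (ν := μ k) hX hXb haM (bK_ae_le μ k hC x) hl
      have e1 : condExpK μ k (fun z => U z * log (U z)) x
          = ∫ y, l * f (Function.update x k y) * exp (l * f (Function.update x k y)) ∂(μ k) := by
        unfold condExpK
        refine integral_congr_ae (Filter.Eventually.of_forall fun y => ?_)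
        simp only [hU]
        rw [Real.log_exp]
        ring
      have e2 : E k x = ∫ y, exp (l * f (Function.update x k y)) ∂(μ k) := by
        show condExpK μ k U x = _
        unfold condExpK
        simp only [hU]
      have e3 : condExpK μ k (G k) x
          = ∫ y, (f (Function.update x k y) - bK μ k f x) ^ 2
              * exp (l * f (Function.update x k y)) ∂(μ k) := by
        unfold condExpK
        refine integral_congr_ae (Filter.Eventually.of_forall fun y => ?_)
        simp only [hG, hU]
        rw [bK_update_self]
      rw [e1, e2, e3]
      exact h1d
    have hC2m : Measurable fun x =>
        condExpK μ k (fun z => U z * log (U z)) x - E k x * log (E k x) :=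
      (condExpK_measurable μ k hUlogUm).sub ((hEm k).mul (hEm k).log)
    have hC2b : ∀ x, |condExpK μ k (fun z => U z * log (U z)) x - E k x * log (E k x)|
        ≤ M₀ * (l * C) + M₀ * (l * C) := by
      intro x
      calc |condExpK μ k (fun z => U z * log (U z)) x - E k x * log (E k x)|
          ≤ |condExpK μ k (fun z => U z * log (U z)) x| + |E k x * log (E k x)| := abs_sub _ _
        _ ≤ M₀ * (l * C) + M₀ * (l * C) :=
            add_le_add (condExpK_abs_le μ k hUlogUb x) (hElogEb k x)
    have hstep4 : (∫ x, U x * log (U x) ∂pp) - (∫ x, E k x * log (E k x) ∂pp)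
        ≤ l ^ 2 / 2 * ∫ x, G k x ∂pp := by
      have hInt := integral_mono (μ := pp) (integrable_of_bdd' hC2m hC2b)
        ((integrable_of_bdd' (condExpK_measurable μ k (hGm k))
          (condExpK_abs_le μ k (hGb k))).const_mul (l ^ 2 / 2)) hcondent
      have e4 : ∫ x, (condExpK μ k (fun z => U z * log (U z)) x - E k x * log (E k x)) ∂pp
          = (∫ x, condExpK μ k (fun z => U z * log (U z)) x ∂pp)
            - ∫ x, E k x * log (E k x) ∂pp :=
        integral_sub
          (integrable_of_bdd' (condExpK_measurable μ k hUlogUm) (condExpK_abs_le μ k hUlogUb))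
          (integrable_of_bdd' ((hEm k).mul (hEm k).log) (hElogEb k))
      have e5 : ∫ x, l ^ 2 / 2 * condExpK μ k (G k) x ∂pp
          = l ^ 2 / 2 * ∫ x, condExpK μ k (G k) x ∂pp :=
        integral_const_mul (l ^ 2 / 2) _
      have hInt' : ∫ x, (condExpK μ k (fun z => U z * log (U z)) x
            - E k x * log (E k x)) ∂pp
          ≤ ∫ x, l ^ 2 / 2 * condExpK μ k (G k) x ∂pp := hInt
      rw [e4, e5, integral_condExpK μ k (hGm k) (hGb k), ← hfub3] at hInt'
      exact hInt'
    calc ∫ x, U x * (log (V j x) - log (V (j + 1) x)) ∂pp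
        ≤ (∫ x, U x * log (U x) ∂pp) - (∫ x, U x * log (E k x) ∂pp)
          + (∫ x, V j x * (E k x / V (j + 1) x) ∂pp) - m := hdual
      _ = (∫ x, U x * log (U x) ∂pp) - (∫ x, E k x * log (E k x) ∂pp) := by
          rw [hfub1, hfub2]; ring
      _ ≤ l ^ 2 / 2 * ∫ x, G k x ∂pp := hstep4
  -- sum over coordinates
  have hmain : ∫ x, U x * log (U x) ∂pp - m * log m
      ≤ l ^ 2 / 2 * ∑ k : Fin n, ∫ x, G k x ∂pp := by
    rw [hEnt_eq]
    have h1 : ∑ j ∈ Finset.range n, ∫ x, U x * (log (V j x) - log (V (j + 1) x)) ∂pp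
        ≤ ∑ j ∈ Finset.range n,
          (if h : j < n then l ^ 2 / 2 * ∫ x, G ⟨j, h⟩ x ∂pp else 0) := by
      refine Finset.sum_le_sum fun j hjr => ?_
      have hj : j < n := Finset.mem_range.1 hjr
      rw [dif_pos hj]
      exact hperj j hj
    have h2 : ∑ j ∈ Finset.range n,
        (if h : j < n then l ^ 2 / 2 * ∫ x, G ⟨j, h⟩ x ∂pp else 0)
        = ∑ k : Fin n, (l ^ 2 / 2 * ∫ x, G k x ∂pp) := by
      rw [← Fin.sum_univ_eq_sum_range
        (fun j => if h : j < n then l ^ 2 / 2 * ∫ x, G ⟨j, h⟩ x ∂pp else 0) n]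
      refine Finset.sum_congr rfl fun k _ => ?_
      rw [dif_pos k.2]
    calc ∑ j ∈ Finset.range n, ∫ x, U x * (log (V j x) - log (V (j + 1) x)) ∂pp
        ≤ ∑ j ∈ Finset.range n,
          (if h : j < n then l ^ 2 / 2 * ∫ x, G ⟨j, h⟩ x ∂pp else 0) := h1
      _ = ∑ k : Fin n, (l ^ 2 / 2 * ∫ x, G k x ∂pp) := h2
      _ = l ^ 2 / 2 * ∑ k : Fin n, ∫ x, G k x ∂pp := by rw [Finset.mul_sum]
  have hsumG : ∑ k : Fin n, ∫ x, G k x ∂pp = ∫ x, (∑ k : Fin n, G k x) ∂pp :=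
    (integral_finset_sum _ (fun k _ => integrable_of_bdd' (hGm k) (hGb k))).symm
  have haebound : ∀ᵐ x ∂pp, ∑ k : Fin n, G k x ≤ a * U x := by
    have hball : ∀ᵐ x ∂pp, ∀ k : Fin n, bK μ k f x ≤ f x :=
      ae_all_iff.2 fun k : Fin n => bK_ae_le_self μ k hf hC
    filter_upwards [ha, hball] with x hx1 hx2
    have hterm : ∀ k : Fin n, (f x - bK μ k f x) ^ 2 ≤ (f x - condInfK k f x) ^ 2 := by
      intro k
      have h1 : 0 ≤ f x - bK μ k f x := sub_nonneg.2 (hx2 k)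
      have h2 : f x - bK μ k f x ≤ f x - condInfK k f x :=
        sub_le_sub_left (condInfK_le_bK μ k hC x) _
      exact pow_le_pow_left₀ h1 h2 2
    calc ∑ k : Fin n, G k x = (∑ k : Fin n, (f x - bK μ k f x) ^ 2) * U x := by
          rw [Finset.sum_mul]
      _ ≤ Dproxy f x * U x := by
          refine mul_le_mul_of_nonneg_right ?_ (hU0 x).le
          exact Finset.sum_le_sum fun k _ => hterm k
      _ ≤ a * U x := mul_le_mul_of_nonneg_right hx1 (hU0 x).le
  have hGsm : Measurable fun x => ∑ k : Fin n, G k x :=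
    Finset.measurable_sum _ fun k _ => hGm k
  have hGsb : ∀ x, |∑ k : Fin n, G k x| ≤ (n : ℝ) * ((2 * C) ^ 2 * M₀) := by
    intro x
    calc |∑ k : Fin n, G k x| ≤ ∑ k : Fin n, |G k x| := Finset.abs_sum_le_sum_abs _ _
      _ ≤ ∑ _k : Fin n, ((2 * C) ^ 2 * M₀) := Finset.sum_le_sum fun k _ => hGb k x
      _ = (n : ℝ) * ((2 * C) ^ 2 * M₀) := by
          rw [Finset.sum_const, Finset.card_univ, Fintype.card_fin, nsmul_eq_mul]
  have hfinal : ∫ x, (∑ k : Fin n, G k x) ∂pp ≤ a * m := by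
    have hInt := integral_mono_ae (integrable_of_bdd' hGsm hGsb)
      ((integrable_of_bdd' hUm hUb).const_mul a) haebound
    rwa [integral_const_mul] at hInt
  -- final assembly
  have hLHSeq : l * (∫ x, f x * exp (l * f x) ∂pp) = ∫ x, U x * log (U x) ∂pp := by
    rw [← integral_const_mul]
    refine integral_congr_ae (Filter.Eventually.of_forall fun x => ?_)
    simp only [hU]
    rw [Real.log_exp]
    ring
  have hl2 : 0 ≤ l ^ 2 / 2 := by positivity
  rw [hLHSeq]
  calc ∫ x, U x * log (U x) ∂pp - m * log m
      ≤ l ^ 2 / 2 * ∑ k : Fin n, ∫ x, G k x ∂pp := hmain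
    _ = l ^ 2 / 2 * ∫ x, (∑ k : Fin n, G k x) ∂pp := by rw [hsumG]
    _ ≤ l ^ 2 / 2 * (a * m) := mul_le_mul_of_nonneg_left hfinal hl2
    _ = l ^ 2 / 2 * a * m := by ring

end KEI

section Herbst
variable {n : ℕ} {Ω : Fin n → Type*} [∀ k, MeasurableSpace (Ω k)]
variable (μ : ∀ k, Measure (Ω k)) [∀ k, IsProbabilityMeasure (μ k)]

lemma herbst_bound {f : (∀ i, Ω i) → ℝ} {C : ℝ} (hf : Measurable f) (hC : ∀ x, |f x| ≤ C)
    {a : ℝ} (ha : ∀ᵐ x ∂(Measure.pi μ), Dproxy f x ≤ a) {l : ℝ} (hlpos : 0 < l) :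
    log (∫ x, exp (l * f x) ∂(Measure.pi μ))
      ≤ l * (∫ x, f x ∂(Measure.pi μ)) + a * l ^ 2 / 2 := by
  have hCnn : 0 ≤ C := by
    have hNx : Nonempty (∀ i, Ω i) := ⟨fun i => (nonempty_of_prob (μ i)).some⟩
    exact le_trans (abs_nonneg _) (hC hNx.some)
  set pp := Measure.pi μ with hpp
  haveI : IsProbabilityMeasure pp := by rw [hpp]; infer_instance
  set Z : ℝ → ℝ := fun s => ∫ x, exp (s * f x) ∂pp with hZ
  set F : ℝ → ℝ := fun s => ∫ x, f x * exp (s * f x) ∂pp with hF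
  have hintZ : ∀ s : ℝ, Integrable (fun x => exp (s * f x)) pp := by
    intro s
    refine integrable_of_bdd' ((hf.const_mul s).exp) (M := exp (|s| * C)) fun x => ?_
    rw [abs_of_pos (exp_pos _)]
    refine exp_le_exp.2 ?_
    calc s * f x ≤ |s * f x| := le_abs_self _
      _ = |s| * |f x| := abs_mul _ _
      _ ≤ |s| * C := mul_le_mul_of_nonneg_left (hC x) (abs_nonneg _)
  have hintF : ∀ s : ℝ, Integrable (fun x => f x * exp (s * f x)) pp := by
    intro s
    refine integrable_of_bdd' (hf.mul (hf.const_mul s).exp) (M := C * exp (|s| * C)) fun x => ?_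
    rw [abs_mul, abs_of_pos (exp_pos _)]
    refine mul_le_mul (hC x) (exp_le_exp.2 ?_) (exp_pos _).le hCnn
    calc s * f x ≤ |s * f x| := le_abs_self _
      _ = |s| * |f x| := abs_mul _ _
      _ ≤ |s| * C := mul_le_mul_of_nonneg_left (hC x) (abs_nonneg _)
  have hZpos : ∀ s, 0 < Z s := by
    intro s
    have hlb : ∀ x, exp (-(|s| * C)) ≤ exp (s * f x) := by
      intro x
      refine exp_le_exp.2 ?_
      have : |s * f x| ≤ |s| * C := by
        rw [abs_mul]
        exact mul_le_mul_of_nonneg_left (hC x) (abs_nonneg _)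
      linarith [neg_le_of_abs_le this]
    have h := integral_mono (μ := pp) (integrable_const (exp (-(|s| * C)))) (hintZ s) hlb
    simp only [integral_const, probReal_univ, ENNReal.toReal_one, one_smul] at h
    exact lt_of_lt_of_le (exp_pos _) h
  have hderiv : ∀ s : ℝ, HasDerivAt Z (F s) s := by
    intro s
    have h := hasDerivAt_integral_of_dominated_loc_of_deriv_le (μ := pp)
      (F := fun t x => exp (t * f x)) (F' := fun t x => f x * exp (t * f x)) (x₀ := s)
      (bound := fun _ => C * exp ((|s| + 1) * C)) (s := Metric.ball s 1) (Metric.ball_mem_nhds s one_pos)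
      (Filter.Eventually.of_forall fun t => ((hf.const_mul t).exp).aestronglyMeasurable)
      (hintZ s) ((hintF s).aestronglyMeasurable)
      (Filter.Eventually.of_forall fun x => ?_) (integrable_const _)
      (Filter.Eventually.of_forall fun x => ?_)
    · exact h.2
    · intro t htb
      have h1 : |t| ≤ |s| + 1 := by
        rw [Metric.mem_ball, Real.dist_eq] at htb
        have := abs_sub_abs_le_abs_sub t s
        linarith
      have h2 : |f x * exp (t * f x)| ≤ C * exp ((|s| + 1) * C) := by
        rw [abs_mul, abs_of_pos (exp_pos _)]
        refine mul_le_mul (hC x) (exp_le_exp.2 ?_) (exp_pos _).le hCnn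
        calc t * f x ≤ |t * f x| := le_abs_self _
          _ = |t| * |f x| := abs_mul _ _
          _ ≤ (|s| + 1) * C :=
            mul_le_mul h1 (hC x) (abs_nonneg _) (by linarith [abs_nonneg s])
      calc ‖f x * exp (t * f x)‖ = |f x * exp (t * f x)| := Real.norm_eq_abs _
        _ ≤ _ := h2
    · intro t _
      have := ((hasDerivAt_id t).mul_const (f x)).exp
      simpa [mul_comm] using this
  set L : ℝ → ℝ := fun s => log (Z s) with hL
  have hLderiv : ∀ s, HasDerivAt L (F s / Z s) s := fun s => (hderiv s).log (hZpos s).ne'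
  have hZ0 : Z 0 = 1 := by
    simp only [hZ, zero_mul, Real.exp_zero]
    simp [measure_univ]
  have hL0 : L 0 = 0 := by rw [hL]; simp [hZ0]
  set h : ℝ → ℝ := fun s => L s / s - a / 2 * s with hh
  -- h is antitone on Ioi 0
  have hhderiv : ∀ s : ℝ, 0 < s →
      HasDerivAt h ((F s / Z s * s - L s) / s ^ 2 - a / 2) s := by
    intro s hs
    have h1 : HasDerivAt (fun u : ℝ => L u / u) ((F s / Z s * s - L s * 1) / s ^ 2) s :=
      (hLderiv s).div (hasDerivAt_id s) hs.ne'
    have h2 : HasDerivAt (fun u : ℝ => a / 2 * u) (a / 2) s := by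
      simpa using (hasDerivAt_id s).const_mul (a / 2)
    have := h1.sub h2
    simp only [mul_one] at this; exact this
  have hantitone : AntitoneOn h (Set.Ioi 0) := by
    refine antitoneOn_of_deriv_nonpos (convex_Ioi 0) ?_ ?_ ?_
    · intro s hs
      exact (hhderiv s hs).continuousAt.continuousWithinAt
    · intro s hs
      rw [interior_Ioi] at hs
      exact (hhderiv s hs).differentiableAt.differentiableWithinAt
    · intro s hs
      rw [interior_Ioi] at hs
      rw [(hhderiv s hs).deriv]
      have hs' : (0:ℝ) < s := hs
      have hkei := entropy_ineq μ hf hC hs'.le ha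
      have hzeq : Z s = ∫ x, exp (s * f x) ∂pp := rfl
      have hfeq : F s = ∫ x, f x * exp (s * f x) ∂pp := rfl
      rw [← hzeq, ← hfeq] at hkei
      have hZs := hZpos s
      have hq : F s = F s / Z s * Z s := (div_mul_cancel₀ _ hZs.ne').symm
      have h2 : (s * (F s / Z s) - log (Z s)) * Z s ≤ s ^ 2 / 2 * a * Z s := by
        nlinarith [hkei, hq]
      have h3 : s * (F s / Z s) - log (Z s) ≤ s ^ 2 / 2 * a :=
        le_of_mul_le_mul_right (by linarith) hZs
      have h4 : (F s / Z s * s - L s) / s ^ 2 ≤ a / 2 := by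
        rw [div_le_iff₀ (pow_pos hs' 2), hL]
        nlinarith [h3]
      linarith
  -- limit at 0+
  have hslope : Filter.Tendsto (fun s => L s / s) (nhdsWithin 0 (Set.Ioi 0))
      (nhds (∫ x, f x ∂pp)) := by
    have h0 := hLderiv 0
    rw [hasDerivAt_iff_tendsto_slope] at h0
    have heq : F 0 / Z 0 = ∫ x, f x ∂pp := by
      rw [hZ0]
      simp only [hF, zero_mul, Real.exp_zero, mul_one, div_one]
    rw [heq] at h0
    have hmono : nhdsWithin (0:ℝ) (Set.Ioi 0) ≤ nhdsWithin 0 {(0:ℝ)}ᶜ := by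
      apply nhdsWithin_mono
      intro s hs
      exact (ne_of_gt hs)
    have := h0.mono_left hmono
    refine this.congr' ?_
    filter_upwards [self_mem_nhdsWithin] with s hs
    simp [slope_def_field, hL0, div_eq_inv_mul]
  have htendh : Filter.Tendsto h (nhdsWithin 0 (Set.Ioi 0)) (nhds (∫ x, f x ∂pp)) := by
    have h2 : Filter.Tendsto (fun s : ℝ => a / 2 * s) (nhdsWithin 0 (Set.Ioi 0)) (nhds 0) := by
      have : Filter.Tendsto (fun s : ℝ => a / 2 * s) (nhds 0) (nhds (a / 2 * 0)) :=
        (continuous_const.mul continuous_id).tendsto 0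
      rw [mul_zero] at this
      exact this.mono_left nhdsWithin_le_nhds
    have := hslope.sub h2
    simpa using this
  have hfin : h l ≤ ∫ x, f x ∂pp := by
    refine ge_of_tendsto htendh ?_
    filter_upwards [Ioc_mem_nhdsGT_of_mem (Set.mem_Ico.2 ⟨le_refl 0, hlpos⟩)] with s hs
    exact hantitone (Set.mem_Ioi.2 hs.1) (Set.mem_Ioi.2 (lt_of_lt_of_le hs.1 hs.2)) hs.2
  have : L l / l - a / 2 * l ≤ ∫ x, f x ∂pp := hfin
  have hdiv : L l / l ≤ (∫ x, f x ∂pp) + a / 2 * l := by linarith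
  have := (div_le_iff₀ hlpos).1 hdiv
  calc log (∫ x, exp (l * f x) ∂pp) = L l := rfl
    _ ≤ ((∫ x, f x ∂pp) + a / 2 * l) * l := this
    _ = l * (∫ x, f x ∂pp) + a * l ^ 2 / 2 := by ring

end Herbst

section Statements

variable {n : ℕ} {Ω : Fin n → Type*} [∀ k, MeasurableSpace (Ω k)]

/-- Upper tail bound via the worst-case variance proxy. -/
theorem stmt_17 (μ : ∀ k, Measure (Ω k)) [∀ k, IsProbabilityMeasure (μ k)]
    (f : (∀ i, Ω i) → ℝ) (hf : Measurable f) (C : ℝ) (hC : ∀ x, |f x| ≤ C)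
    (t : ℝ) (ht : 0 < t) :
    ((Measure.pi μ) {x | f x - ∫ y, f y ∂(Measure.pi μ) > t}).toReal
      ≤ Real.exp (-t ^ 2 / (2 * essSup (Dproxy f) (Measure.pi μ))) := by
  classical
  set m := ∫ y, f y ∂(Measure.pi μ) with hm
  set v := essSup (Dproxy f) (Measure.pi μ) with hv
  haveI : IsProbabilityMeasure (Measure.pi μ) := inferInstance
  have hle1 : ((Measure.pi μ) {x | f x - m > t}).toReal ≤ 1 := by
    have h := prob_le_one (μ := Measure.pi μ) (s := {x | f x - m > t})
    calc ((Measure.pi μ) {x | f x - m > t}).toReal ≤ ((1 : ENNReal)).toReal :=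
        ENNReal.toReal_mono (by simp) h
      _ = 1 := by simp
  have hDbdd : ∀ x, Dproxy f x ≤ (n : ℝ) * (2 * C) ^ 2 := by
    intro x
    have hterm : ∀ k : Fin n, (f x - condInfK k f x) ^ 2 ≤ (2 * C) ^ 2 := by
      intro k
      have hN : Nonempty (Ω k) := nonempty_of_prob (μ k)
      have h1 := condInfK_le_self k hN hC x
      have h2 := neg_C_le_condInfK k hN hC x
      have h3 := hC x
      rw [abs_le] at h3
      refine sq_le_sq' (by linarith) (by linarith)
    calc Dproxy f x ≤ ∑ _k : Fin n, (2 * C) ^ 2 :=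
        Finset.sum_le_sum fun k _ => hterm k
      _ = (n : ℝ) * (2 * C) ^ 2 := by
        rw [Finset.sum_const, Finset.card_univ, Fintype.card_fin, nsmul_eq_mul]
  rcases le_or_gt v 0 with hv0 | hvpos
  · have hexp0 : (0 : ℝ) ≤ -t ^ 2 / (2 * v) := by
      rcases lt_or_eq_of_le hv0 with hlt | heq
      · exact div_nonneg_of_nonpos (by nlinarith) (by nlinarith)
      · rw [heq]
        simp
    calc ((Measure.pi μ) {x | f x - m > t}).toReal ≤ 1 := hle1
      _ = Real.exp 0 := (Real.exp_zero).symm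
      _ ≤ Real.exp (-t ^ 2 / (2 * v)) := Real.exp_le_exp.2 hexp0
  · have hbU : Filter.IsBoundedUnder (· ≤ ·) (ae (Measure.pi μ)) (Dproxy f) :=
      Filter.isBoundedUnder_of ⟨(n : ℝ) * (2 * C) ^ 2, fun x => hDbdd x⟩
    have haev : ∀ᵐ x ∂(Measure.pi μ), Dproxy f x ≤ v := ae_le_essSup hbU
    have key : ∀ a : ℝ, v < a →
        ((Measure.pi μ) {x | f x - m > t}).toReal ≤ Real.exp (-t ^ 2 / (2 * a)) := by
      intro a hva
      have ha0 : 0 < a := lt_trans hvpos hva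
      have hae : ∀ᵐ x ∂(Measure.pi μ), Dproxy f x ≤ a :=
        haev.mono fun x hx => le_trans hx hva.le
      set l := t / a with hl
      have hlpos : 0 < l := div_pos ht ha0
      have hCnn : 0 ≤ C := by
        have hNx : Nonempty (∀ i, Ω i) := ⟨fun i => (nonempty_of_prob (μ i)).some⟩
        exact le_trans (abs_nonneg _) (hC hNx.some)
      have hintexp : Integrable (fun x => Real.exp (l * f x)) (Measure.pi μ) := by
        refine integrable_of_bdd' ((hf.const_mul l).exp) (M := Real.exp (|l| * C)) fun x => ?_
        rw [abs_of_pos (Real.exp_pos _)]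
        refine Real.exp_le_exp.2 ?_
        calc l * f x ≤ |l * f x| := le_abs_self _
          _ = |l| * |f x| := abs_mul _ _
          _ ≤ |l| * C := mul_le_mul_of_nonneg_left (hC x) (abs_nonneg _)
      have hch := ProbabilityTheory.measure_ge_le_exp_mul_mgf (μ := Measure.pi μ) (X := f)
        (m + t) hlpos.le hintexp
      have hsub : {x | f x - m > t} ⊆ {ω | m + t ≤ f ω} := by
        intro x hx
        simp only [Set.mem_setOf_eq] at hx ⊢
        linarith
      have hmono : ((Measure.pi μ) {x | f x - m > t}).toReal
          ≤ ((Measure.pi μ) {ω | m + t ≤ f ω}).toReal :=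
        ENNReal.toReal_mono (measure_ne_top _ _) (measure_mono hsub)
      have hmgf_pos : 0 < ProbabilityTheory.mgf f (Measure.pi μ) l :=
        ProbabilityTheory.mgf_pos hintexp
      have hH := herbst_bound μ hf hC hae hlpos
      have hmgf_eq : ProbabilityTheory.mgf f (Measure.pi μ) l
          = ∫ x, Real.exp (l * f x) ∂(Measure.pi μ) := rfl
      have hmgf_le : ProbabilityTheory.mgf f (Measure.pi μ) l
          ≤ Real.exp (l * m + a * l ^ 2 / 2) := by
        rw [← Real.exp_log hmgf_pos]
        refine Real.exp_le_exp.2 ?_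
        rw [hmgf_eq]
        exact hH
      have hfin : ((Measure.pi μ) {x | f x - m > t}).toReal
          ≤ Real.exp (-l * (m + t)) * Real.exp (l * m + a * l ^ 2 / 2) := by
        refine le_trans hmono (le_trans hch ?_)
        exact mul_le_mul_of_nonneg_left hmgf_le (Real.exp_pos _).le
      rw [← Real.exp_add] at hfin
      have harith : -l * (m + t) + (l * m + a * l ^ 2 / 2) = -t ^ 2 / (2 * a) := by
        rw [hl]
        field_simp
        ring
      rwa [harith] at hfin
    have htend : Filter.Tendsto (fun a : ℝ => Real.exp (-t ^ 2 / (2 * a)))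
        (nhdsWithin v (Set.Ioi v)) (nhds (Real.exp (-t ^ 2 / (2 * v)))) := by
      have h2v : (2 : ℝ) * v ≠ 0 := by positivity
      have hdiv : ContinuousAt (fun a : ℝ => -t ^ 2 / (2 * a)) v :=
        ContinuousAt.div continuousAt_const
          ((continuous_const.mul continuous_id).continuousAt) h2v
      have hc : ContinuousAt (fun a : ℝ => Real.exp (-t ^ 2 / (2 * a))) v :=
        (Real.continuous_exp.continuousAt).comp hdiv
      exact hc.tendsto.mono_left nhdsWithin_le_nhds
    refine ge_of_tendsto htend ?_
    filter_upwards [self_mem_nhdsWithin] with a ha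
    exact key a ha

end Statements
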